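/- Let f : ℕ → [0,∞) with f(0) > f(k) for k ≥ 1, a > 0, and let (x_k) be a quasispecies associated to f. Then for every k ≥ 1, f(k) = (f(0)/x_k) · ∑_{j=0}^{k} (−1)^j (a^j/j!) x_{k−j}. -/

import Mathlib

open Finset

/-- The alternating/plain exponential coefficients convolve to δ₀. -/
lemma quasi_aux_conv (a : ℝ) (n : ℕ) :
    ∑ i ∈ Finset.range (n + 1),
      ((-1 : ℝ) ^ i * a ^ i / (Nat.factorial i)) * (a ^ (n - i) / (Nat.factorial (n - i)))
    = if n = 0 then 1 else 0 := by
  have key : ∀ i ∈ Finset.range (n + 1),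
      ((-1 : ℝ) ^ i * a ^ i / (Nat.factorial i)) * (a ^ (n - i) / (Nat.factorial (n - i)))
      = ((-a) ^ i * a ^ (n - i) * (n.choose i : ℝ)) / (Nat.factorial n) := by
    intro i hi
    have hin : i ≤ n := Nat.lt_succ_iff.mp (Finset.mem_range.mp hi)
    have hfact : ((n.choose i : ℝ)) * (Nat.factorial i) * (Nat.factorial (n - i))
        = (Nat.factorial n) := by
      exact_mod_cast congrArg (Nat.cast : ℕ → ℝ)
        (Nat.choose_mul_factorial_mul_factorial hin)
    have h1 : (Nat.factorial i : ℝ) ≠ 0 := Nat.cast_ne_zero.mpr (Nat.factorial_ne_zero i)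
    have h2 : (Nat.factorial (n - i) : ℝ) ≠ 0 := Nat.cast_ne_zero.mpr (Nat.factorial_ne_zero _)
    have h3 : (Nat.factorial n : ℝ) ≠ 0 := Nat.cast_ne_zero.mpr (Nat.factorial_ne_zero n)
    field_simp
    rw [neg_pow, ← hfact]
    ring
  rw [Finset.sum_congr rfl key, ← Finset.sum_div, ← add_pow (-a) a n]
  simp only [neg_add_cancel]
  rcases n with _ | m
  · simp
  · simp [Nat.succ_ne_zero, zero_pow]

/-- Power-series inversion of the Poisson smoothing. -/
lemma quasi_aux_inv (a : ℝ) (x : ℕ → ℝ) (k : ℕ) :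
    ∑ j ∈ Finset.range (k + 1),
      (∑ i ∈ Finset.range (j + 1),
        ((-1 : ℝ) ^ i * a ^ i / (Nat.factorial i)) * x (j - i))
      * (a ^ (k - j) / (Nat.factorial (k - j)))
    = x k := by
  set c : ℕ → ℝ := fun i => (-1 : ℝ) ^ i * a ^ i / (Nat.factorial i) with hc
  set d : ℕ → ℝ := fun i => a ^ i / (Nat.factorial i) with hd
  have hCD : PowerSeries.mk c * PowerSeries.mk d = 1 := by
    ext n
    rw [PowerSeries.coeff_mul, Finset.Nat.sum_antidiagonal_eq_sum_range_succ_mk]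
    simp only [PowerSeries.coeff_mk, PowerSeries.coeff_one]
    simpa using quasi_aux_conv a n
  have hmain : (PowerSeries.mk c * PowerSeries.mk x) * PowerSeries.mk d
      = PowerSeries.mk x := by
    rw [mul_comm (PowerSeries.mk c) (PowerSeries.mk x), mul_assoc, hCD, mul_one]
  have := congrArg (PowerSeries.coeff (R := ℝ) k) hmain
  rw [PowerSeries.coeff_mul, Finset.Nat.sum_antidiagonal_eq_sum_range_succ_mk] at this
  simp only [PowerSeries.coeff_mk] at this
  rw [← this]
  apply Finset.sum_congr rfl
  intro j hj
  rw [PowerSeries.coeff_mul, Finset.Nat.sum_antidiagonal_eq_sum_range_succ_mk]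
  simp only [PowerSeries.coeff_mk]
  rfl

theorem quasispecies_fitness_formula
    (f : ℕ → ℝ) (hf0 : ∀ k, 0 ≤ f k) (hf : ∀ k, 1 ≤ k → f k < f 0)
    (a : ℝ) (ha : 0 < a)
    (x : ℕ → ℝ) (hx0 : ∀ k, 0 ≤ x k) (hxpos : 0 < x 0)
    (hsum : ∑' k, x k = 1)
    (hΦ : Summable (fun j => x j * f j))
    (hstat : ∀ k, ∑ j ∈ Finset.range (k + 1),
        x j * f j * Real.exp (-a) * a ^ (k - j) / (Nat.factorial (k - j))
      = x k * ∑' j, x j * f j) :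
    ∀ k, 1 ≤ k →
      f k = f 0 / x k *
        ∑ j ∈ Finset.range (k + 1),
          (-1 : ℝ) ^ j * a ^ j / (Nat.factorial j) * x (k - j) := by
  set Φ : ℝ := ∑' j, x j * f j with hΦdef
  set e : ℝ := Real.exp (-a) with he
  have hepos : 0 < e := Real.exp_pos _
  have hf0pos : 0 < f 0 := lt_of_le_of_lt (hf0 1) (hf 1 le_rfl)
  -- From k = 0 : Φ = f 0 * e
  have hΦeq : Φ = f 0 * e := by
    have h0 := hstat 0
    simp at h0
    have : x 0 * (f 0 * e) = x 0 * Φ := by rw [← h0]; ring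
    have := mul_left_cancel₀ (ne_of_gt hxpos) this
    linarith
  have hΦpos : 0 < Φ := by rw [hΦeq]; positivity
  -- positivity of all x k
  have hxk : ∀ k, 0 < x k := by
    intro k
    have hterm : 0 < x 0 * f 0 * e * a ^ (k - 0) / (Nat.factorial (k - 0)) := by
      have : (0:ℝ) < (Nat.factorial (k - 0) : ℝ) := by positivity
      positivity
    have hle : x 0 * f 0 * e * a ^ (k - 0) / (Nat.factorial (k - 0)) ≤
        ∑ j ∈ Finset.range (k + 1),
          x j * f j * e * a ^ (k - j) / (Nat.factorial (k - j)) := by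
      apply Finset.single_le_sum (f := fun j =>
        x j * f j * e * a ^ (k - j) / (Nat.factorial (k - j)))
      · intro j _
        have : (0:ℝ) < (Nat.factorial (k - j) : ℝ) := by positivity
        have := hx0 j; have := hf0 j
        positivity
      · exact Finset.mem_range.mpr (Nat.succ_pos k)
    have hpos : 0 < x k * Φ := lt_of_lt_of_le hterm (hle.trans_eq (hstat k))
    nlinarith [hx0 k]
  -- the key identity, by strong induction
  have hkey : ∀ k, x k * f k * e =
      Φ * ∑ j ∈ Finset.range (k + 1),
        (-1 : ℝ) ^ j * a ^ j / (Nat.factorial j) * x (k - j) := by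
    intro k
    induction k using Nat.strong_induction_on with
    | _ k ih =>
      have hs := hstat k
      rw [Finset.sum_range_succ] at hs
      simp only [Nat.sub_self, pow_zero, Nat.factorial_zero, Nat.cast_one, mul_one,
        div_one] at hs
      have hS := quasi_aux_inv a x k
      rw [Finset.sum_range_succ] at hS
      simp only [Nat.sub_self, pow_zero, Nat.factorial_zero, Nat.cast_one, div_one] at hS
      have hrw : ∑ j ∈ Finset.range k,
          x j * f j * e * a ^ (k - j) / (Nat.factorial (k - j))
          = ∑ j ∈ Finset.range k,
            (Φ * ∑ i ∈ Finset.range (j + 1),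
              (-1 : ℝ) ^ i * a ^ i / (Nat.factorial i) * x (j - i))
            * (a ^ (k - j) / (Nat.factorial (k - j))) := by
        apply Finset.sum_congr rfl
        intro j hj
        rw [← ih j (Finset.mem_range.mp hj)]
        ring
      rw [hrw] at hs
      have hsum2 : ∑ j ∈ Finset.range k,
          (Φ * ∑ i ∈ Finset.range (j + 1),
            (-1 : ℝ) ^ i * a ^ i / (Nat.factorial i) * x (j - i))
          * (a ^ (k - j) / (Nat.factorial (k - j)))
          = Φ * ∑ j ∈ Finset.range k,
            (∑ i ∈ Finset.range (j + 1),
              (-1 : ℝ) ^ i * a ^ i / (Nat.factorial i) * x (j - i))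
            * (a ^ (k - j) / (Nat.factorial (k - j))) := by
        rw [Finset.mul_sum]; apply Finset.sum_congr rfl; intro j _; ring
      rw [hsum2] at hs
      -- hs : Φ * (∑_{j<k} S j * d(k-j)) + x k * f k * e = x k * Φ
      -- hS : ∑_{j<k} S j * d(k-j) + S k = x k
      nlinarith [hs, hS]
  intro k hk
  have hxk' := hxk k
  have := hkey k
  rw [hΦeq] at this
  have hx : x k * f k = f 0 * ∑ j ∈ Finset.range (k + 1),
      (-1 : ℝ) ^ j * a ^ j / (Nat.factorial j) * x (k - j) := by
    have he' : e ≠ 0 := ne_of_gt hepos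
    field_simp at this ⊢
    nlinarith [this]
  rw [div_mul_eq_mul_div, eq_div_iff (ne_of_gt hxk')]
  linarith [hx]
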